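/- Let G be a graph, M a positive semidefinite matrix indexed by V(G) with (M)_{ij} x_i x_j ≤ 0 for nonadjacent distinct i, j, x ∈ R(M) totally nonzero, and suppose G has an independent set C such that M[C] is diagonal, (M)_{vv}/x_v² = c := max_{u∈V(G)} (M)_{uu}/x_u² for all v ∈ C, and c·x_v = Σ_{u∈C} (M)_{vu}·x_u⁻¹ for all v ∉ C. Then α(G) = |C| = (xᵀ M# x)·c. -/

import Mathlib

open Matrix Finset

/-- The independence number of a finite simple graph. -/
noncomputable def indepNum {V : Type*} [Fintype V] (G : SimpleGraph V) : ℕ :=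
  sSup {k | ∃ S : Finset V, (∀ u ∈ S, ∀ v ∈ S, u ≠ v → ¬ G.Adj u v) ∧ S.card = k}

/-- Theorem 3.1(2), sufficiency of the equality condition: if an independent set C
satisfies the stated conditions, then α(G) = |C| = (xᵀ M# x)·c. -/
theorem stmt5 (n : ℕ) (G : SimpleGraph (Fin n)) (M : Matrix (Fin n) (Fin n) ℝ)
    (hM : M.PosSemidef) (x : Fin n → ℝ)
    (hxR : ∃ y : Fin n → ℝ, M.mulVec y = x) (hx : ∀ u, x u ≠ 0)
    (hnonadj : ∀ i j, i ≠ j → ¬ G.Adj i j → M i j * x i * x j ≤ 0)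
    (X : Matrix (Fin n) (Fin n) ℝ)
    (h1 : M * X * M = M) (h2 : X * M * X = X) (h3 : M * X = X * M)
    (C : Finset (Fin n)) (hC : ∀ u ∈ C, ∀ v ∈ C, u ≠ v → ¬ G.Adj u v)
    (hdiag : ∀ u ∈ C, ∀ v ∈ C, u ≠ v → M u v = 0)
    (c : ℝ) (hc : c = ⨆ u : Fin n, M u u / (x u) ^ 2)
    (hCmax : ∀ v ∈ C, M v v / (x v) ^ 2 = c)
    (hout : ∀ v ∉ C, c * x v = ∑ u ∈ C, M v u * (x u)⁻¹) :
    (indepNum G : ℝ) = C.card ∧ (C.card : ℝ) = (x ⬝ᵥ X.mulVec x) * c := by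
  classical
  obtain ⟨y, hy⟩ := hxR
  have hsymm : Mᵀ = M := by
    have h := hM.1
    rwa [Matrix.IsHermitian, Matrix.conjTranspose_eq_transpose_of_trivial] at h
  -- symmetry of the bilinear form
  have sdot : ∀ a b : Fin n → ℝ, a ⬝ᵥ M.mulVec b = M.mulVec a ⬝ᵥ b := by
    intro a b
    rw [Matrix.dotProduct_mulVec, ← Matrix.mulVec_transpose, hsymm]
  -- the test vector of a set
  set z : Finset (Fin n) → Fin n → ℝ := fun S v => if v ∈ S then (x v)⁻¹ else 0 with hz
  have hxz : ∀ S : Finset (Fin n), x ⬝ᵥ z S = S.card := by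
    intro S
    simp only [dotProduct, hz, mul_ite, mul_zero]
    rw [Finset.sum_ite_mem, Finset.univ_inter]
    rw [Finset.sum_congr rfl fun v hv => mul_inv_cancel₀ (hx v)]
    simp
  set t : ℝ := y ⬝ᵥ M.mulVec y with hts
  have ht0 : 0 ≤ t := by
    have := hM.dotProduct_mulVec_nonneg y
    simpa using this
  have hcge : ∀ u, M u u / x u ^ 2 ≤ c := by
    intro u
    rw [hc]
    exact le_ciSup (f := fun u => M u u / x u ^ 2)
      (Set.Finite.bddAbove (Set.finite_range _)) u
  -- the double-sum formula for the quadratic form on the test vector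
  have hzMzsum : ∀ S : Finset (Fin n),
      z S ⬝ᵥ M.mulVec (z S) = ∑ u ∈ S, ∑ v ∈ S, (x u)⁻¹ * (M u v * (x v)⁻¹) := by
    intro S
    simp only [dotProduct, Matrix.mulVec, dotProduct, hz, ite_mul, zero_mul, mul_ite, mul_zero]
    rw [Finset.sum_ite_mem, Finset.univ_inter]
    refine Finset.sum_congr rfl fun u hu => ?_
    rw [Finset.mul_sum]
    simp only [mul_ite, mul_zero]
    rw [Finset.sum_ite_mem, Finset.univ_inter]
  -- bound on the quadratic form for independent sets
  have hzMz_le : ∀ S : Finset (Fin n), (∀ u ∈ S, ∀ v ∈ S, u ≠ v → ¬ G.Adj u v) →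
      z S ⬝ᵥ M.mulVec (z S) ≤ c * S.card := by
    intro S hS
    rw [hzMzsum S]
    have hrow : ∀ u ∈ S, ∑ v ∈ S, (x u)⁻¹ * (M u v * (x v)⁻¹) ≤ c := by
      intro u hu
      have : ∑ v ∈ S, (x u)⁻¹ * (M u v * (x v)⁻¹) ≤ ∑ v ∈ S, (if v = u then c else 0) := by
        refine Finset.sum_le_sum fun v hv => ?_
        by_cases hvu : v = u
        · subst hvu
          simp only [if_pos rfl]
          have heq : (x v)⁻¹ * (M v v * (x v)⁻¹) = M v v / x v ^ 2 := by
            rw [pow_two, div_eq_mul_inv, mul_inv]; ring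
          rw [heq]; exact hcge v
        · simp only [if_neg hvu]
          have hne : u ≠ v := fun h => hvu h.symm
          have h0 := hnonadj u v hne (hS u hu v hv hne)
          have heq : (x u)⁻¹ * (M u v * (x v)⁻¹)
              = (M u v * x u * x v) * (((x u)⁻¹) ^ 2 * ((x v)⁻¹) ^ 2) := by
            have hxu := hx u
            have hxv := hx v
            field_simp
          rw [heq]
          exact mul_nonpos_of_nonpos_of_nonneg h0 (by positivity)
      calc ∑ v ∈ S, (x u)⁻¹ * (M u v * (x v)⁻¹) ≤ ∑ v ∈ S, (if v = u then c else 0) := this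
        _ = c := by rw [Finset.sum_ite_eq' S u fun _ => c, if_pos hu]
    calc ∑ u ∈ S, ∑ v ∈ S, (x u)⁻¹ * (M u v * (x v)⁻¹) ≤ ∑ u ∈ S, c :=
          Finset.sum_le_sum hrow
      _ = c * S.card := by rw [Finset.sum_const, nsmul_eq_mul]; ring
  -- Cauchy–Schwarz
  obtain ⟨B, hB⟩ : ∃ B : Matrix (Fin n) (Fin n) ℝ, M = Bᴴ * B := by
    open scoped MatrixOrder in
    obtain ⟨B, hB⟩ := CStarAlgebra.nonneg_iff_eq_star_mul_self.mp hM.nonneg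
    exact ⟨B, by rw [hB, star_eq_conjTranspose]⟩
  have hBq : ∀ a b : Fin n → ℝ, a ⬝ᵥ M.mulVec b = (B.mulVec a) ⬝ᵥ (B.mulVec b) := by
    intro a b
    rw [hB, Matrix.conjTranspose_eq_transpose_of_trivial, ← Matrix.mulVec_mulVec,
      Matrix.dotProduct_mulVec, Matrix.vecMul_transpose]
  have hCS : ∀ a b : Fin n → ℝ,
      (a ⬝ᵥ M.mulVec b) ^ 2 ≤ (a ⬝ᵥ M.mulVec a) * (b ⬝ᵥ M.mulVec b) := by
    intro a b
    rw [hBq a b, hBq a a, hBq b b]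
    have h := Finset.sum_mul_sq_le_sq_mul_sq Finset.univ (B.mulVec a) (B.mulVec b)
    simpa [dotProduct, pow_two] using h
  -- M applied to the test vector of C
  have hMzC : M.mulVec (z C) = c • x := by
    funext v
    have hform : M.mulVec (z C) v = ∑ u ∈ C, M v u * (x u)⁻¹ := by
      simp only [Matrix.mulVec, dotProduct, hz, mul_ite, mul_zero]
      rw [Finset.sum_ite_mem, Finset.univ_inter]
    by_cases hv : v ∈ C
    · have hsum : ∑ u ∈ C, M v u * (x u)⁻¹ = M v v * (x v)⁻¹ := by
        refine Finset.sum_eq_single v (fun u hu hne => ?_) (fun h => absurd hv h)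
        rw [hdiag v hv u hu (fun h => hne h.symm), zero_mul]
      have hMvv : M v v = c * x v ^ 2 := by
        have h := hCmax v hv
        rwa [div_eq_iff (pow_ne_zero 2 (hx v))] at h
      rw [hform, hsum, hMvv]
      have : x v ≠ 0 := hx v
      simp only [Pi.smul_apply, smul_eq_mul]
      field_simp
    · rw [hform, ← hout v hv]
      simp
  -- |C| = c * t
  have hCt : (C.card : ℝ) = c * t := by
    have e1 : (C.card : ℝ) = x ⬝ᵥ z C := (hxz C).symm
    have e2 : x ⬝ᵥ z C = y ⬝ᵥ M.mulVec (z C) := by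
      rw [sdot, hy]
    rw [e1, e2, hMzC, dotProduct_smul, smul_eq_mul]
    congr 1
    rw [hts, ← hy]
  -- x ⬝ X x = t
  have hXx : x ⬝ᵥ X.mulVec x = t := by
    rw [hts, ← hy, Matrix.mulVec_mulVec, ← sdot, Matrix.mulVec_mulVec, ← mul_assoc, h1]
  -- upper bound for independent sets
  have hub : ∀ S : Finset (Fin n), (∀ u ∈ S, ∀ v ∈ S, u ≠ v → ¬ G.Adj u v) →
      (S.card : ℝ) ≤ C.card := by
    intro S hS
    rw [hCt]
    rcases Nat.eq_zero_or_pos S.card with h0 | hpos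
    · rw [h0]
      have : (0:ℝ) ≤ (C.card : ℝ) := Nat.cast_nonneg _
      rw [hCt] at this
      simpa using this
    · have hcard : (0:ℝ) < S.card := by exact_mod_cast hpos
      have e2 : y ⬝ᵥ M.mulVec (z S) = (S.card : ℝ) := by
        rw [sdot, hy, hxz]
      have hcs := hCS y (z S)
      rw [e2, ← hts] at hcs
      have hq := hzMz_le S hS
      have : (S.card : ℝ) ^ 2 ≤ t * (c * S.card) := by
        calc (S.card : ℝ) ^ 2 ≤ t * (z S ⬝ᵥ M.mulVec (z S)) := hcs
          _ ≤ t * (c * S.card) := by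
              exact mul_le_mul_of_nonneg_left hq ht0
      have h2 : (S.card : ℝ) * (S.card : ℝ) ≤ (c * t) * (S.card : ℝ) := by nlinarith
      exact le_of_mul_le_mul_right h2 hcard
  -- conclude
  have hmem : C.card ∈ {k | ∃ S : Finset (Fin n),
      (∀ u ∈ S, ∀ v ∈ S, u ≠ v → ¬ G.Adj u v) ∧ S.card = k} := ⟨C, hC, rfl⟩
  have hubN : ∀ k ∈ {k | ∃ S : Finset (Fin n),
      (∀ u ∈ S, ∀ v ∈ S, u ≠ v → ¬ G.Adj u v) ∧ S.card = k}, k ≤ C.card := by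
    rintro k ⟨S, hS, rfl⟩
    exact_mod_cast hub S hS
  have hα : indepNum G = C.card := by
    unfold indepNum
    refine le_antisymm (csSup_le ⟨C.card, hmem⟩ hubN) (le_csSup ⟨C.card, ?_⟩ hmem)
    intro k hk
    exact hubN k hk
  constructor
  · rw [hα]
  · rw [hXx, hCt]; ring
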